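/- Let R be a unital ring in which 2 is invertible and let A = Mₙ(R) with n ≥ 2. Then A is additively spanned by Jordan products of its idempotents, i.e., A equals the additive subgroup generated by elements e∘f where e, f are idempotent matrices. -/

import Mathlib

open Matrix

section aux
variable {R : Type*} [Ring R] {n : ℕ}

private lemma mulne {i j k l : Fin n} (h : j ≠ k) (x y : R) :
    single i j x * single k l y = 0 :=
  single_mul_single_of_ne _ _ _ _ h _

private lemma muls (i j k : Fin n) (x y : R) :
    single i j x * single j k y = single i k (x * y) :=
  single_mul_single_same _ _ _ _ _

private lemma idemE (i : Fin n) : IsIdempotentElem (single i i (1:R)) := by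
  unfold IsIdempotentElem
  simp

private lemma idem1 {i j : Fin n} (hij : i ≠ j) (c : R) :
    IsIdempotentElem (single i i (1:R) + single i j c) := by
  unfold IsIdempotentElem
  simp [mul_add, add_mul, mulne hij.symm]

private lemma idem2 {i j : Fin n} (hij : i ≠ j) (a : R) :
    IsIdempotentElem (single i i a + single i j a
      + single j i (1-a) + single j j (1-a)) := by
  unfold IsIdempotentElem
  simp only [mul_add, add_mul, muls, mulne hij, mulne hij.symm,
    add_zero, zero_add]
  have e1 : single i i a = single i i (a*a) + single i i (a*(1-a)) := by
    have h : a * a + a * (1 - a) = a := by noncomm_ring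
    rw [← single_add, h]
  have e2 : single i j a = single i j (a*a) + single i j (a*(1-a)) := by
    have h : a * a + a * (1 - a) = a := by noncomm_ring
    rw [← single_add, h]
  have e3 : single j i (1-a)
      = single j i ((1-a)*a) + single j i ((1-a)*(1-a)) := by
    have h : (1 - a) * a + (1 - a) * (1 - a) = 1 - a := by noncomm_ring
    rw [← single_add, h]
  have e4 : single j j (1-a)
      = single j j ((1-a)*a) + single j j ((1-a)*(1-a)) := by
    have h : (1 - a) * a + (1 - a) * (1 - a) = 1 - a := by noncomm_ring
    rw [← single_add, h]
  conv_rhs => rw [e1, e2, e3, e4]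
  abel
end aux

/-- For a unital ring `R` with `2` invertible and `n ≥ 2`, the matrix
ring `Mₙ(R)` is additively spanned by Jordan products of its idempotents. -/
theorem stmt5 {R : Type*} [Ring R] (h2 : IsUnit (2 : R)) (n : ℕ) (hn : 2 ≤ n) :
    AddSubgroup.closure {a : Matrix (Fin n) (Fin n) R | ∃ e f : Matrix (Fin n) (Fin n) R,
      IsIdempotentElem e ∧ IsIdempotentElem f ∧ a = e * f + f * e} = ⊤ := by
  set S := {a : Matrix (Fin n) (Fin n) R | ∃ e f : Matrix (Fin n) (Fin n) R,
      IsIdempotentElem e ∧ IsIdempotentElem f ∧ a = e * f + f * e} with hS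
  set C := AddSubgroup.closure S with hC
  have hnt : Nontrivial (Fin n) := ⟨⟨⟨0, by omega⟩, ⟨1, by omega⟩, by simp [Fin.ext_iff]⟩⟩
  -- off-diagonal entries
  have key1 : ∀ (i j : Fin n), i ≠ j → ∀ c : R, single i j c ∈ C := by
    intro i j hij c
    have m1 : (single i i (1:R) + single i j c) * single i i 1
        + single i i 1 * (single i i (1:R) + single i j c) ∈ C :=
      AddSubgroup.subset_closure ⟨_, _, idem1 hij c, idemE i, rfl⟩
    have m2 : (single i i (1:R)) * single i i 1
        + single i i 1 * single i i 1 ∈ C :=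
      AddSubgroup.subset_closure ⟨_, _, idemE i, idemE i, rfl⟩
    have heq : single i j c =
        ((single i i (1:R) + single i j c) * single i i 1
        + single i i 1 * (single i i (1:R) + single i j c))
        - ((single i i (1:R)) * single i i 1
        + single i i 1 * single i i 1) := by
      simp only [mul_add, add_mul, muls, mulne hij.symm, add_zero, zero_add, mul_one, one_mul]
      abel
    rw [heq]
    exact sub_mem m1 m2
  -- diagonal entries
  have key2 : ∀ (i : Fin n) (c : R), single i i c ∈ C := by
    intro i c
    obtain ⟨j, hj⟩ := exists_ne i
    have hij : i ≠ j := hj.symm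
    obtain ⟨v, hv⟩ := h2
    set a : R := (↑v⁻¹ : R) * c with ha
    have haa : a + a = c := by
      rw [ha, ← two_mul, ← mul_assoc, ← hv, Units.mul_inv, one_mul]
    set e2 := single i i a + single i j a
      + single j i (1-a) + single j j (1-a) with he2
    have m1 : e2 * single i i 1 + single i i 1 * e2 ∈ C :=
      AddSubgroup.subset_closure ⟨_, _, idem2 hij a, idemE i, rfl⟩
    have heq : single i i c =
        (e2 * single i i 1 + single i i 1 * e2)
        - single i j a - single j i (1-a) := by
      rw [he2]
      simp only [mul_add, add_mul, muls, mulne hij, mulne hij.symm,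
        add_zero, zero_add, mul_one, one_mul]
      rw [← haa, single_add]
      abel
    rw [heq]
    exact sub_mem (sub_mem m1 (key1 i j hij a)) (key1 j i hij.symm (1-a))
  rw [eq_top_iff]
  intro M _
  rw [matrix_eq_sum_single M]
  refine AddSubgroup.sum_mem _ fun i _ => AddSubgroup.sum_mem _ fun j _ => ?_
  rcases eq_or_ne i j with rfl | hij
  · exact key2 i _
  · exact key1 i j hij _
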